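/- For every positive integer N, the rational-valued sequence (g_N(δ))_{δ ∈ ℕ, δ ≥ 2} defined by g_N(δ) := ((N·δ + 1)·(δ - 1)^(N-1) + (-1)^N·(δ + 1)) / (δ^2·(δ - 1)^(N-1)) is non-increasing, i.e. g_N(δ + 1) ≤ g_N(δ) for every integer δ ≥ 2. -/
import Mathlib


/-- The sequence `g_N(δ)` from the paper, as a rational number, for `N ≥ 1` and `δ ≥ 2`. -/
def g (N δ : ℕ) : ℚ :=
  (((N : ℚ) * δ + 1) * ((δ : ℚ) - 1) ^ (N - 1) + (-1) ^ N * ((δ : ℚ) + 1)) /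
    ((δ : ℚ) ^ 2 * ((δ : ℚ) - 1) ^ (N - 1))

/-- The key polynomial inequality for the odd-`N` (i.e. `ε = -1`) case. -/
lemma key_odd (k : ℕ) (hk : Even k) (δ : ℕ) (hδ : 2 ≤ δ) :
    ((δ : ℚ) + 1) ^ 3 * (δ : ℚ) ^ k ≤
      ((δ : ℚ) - 1) ^ k * (δ : ℚ) ^ k *
        (((k : ℚ) + 1) * (δ : ℚ) ^ 2 + ((k : ℚ) + 1) * (δ : ℚ) + 2 * (δ : ℚ) + 1) +
      ((δ : ℚ) + 2) * (δ : ℚ) ^ 2 * ((δ : ℚ) - 1) ^ k := by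
  have h2 : (2 : ℚ) ≤ (δ : ℚ) := by exact_mod_cast hδ
  rcases Nat.eq_zero_or_pos k with rfl | hk1
  · norm_num; nlinarith
  have hk2 : 2 ≤ k := by rcases hk with ⟨m, rfl⟩; omega
  have hp1 : (1 : ℚ) ≤ (δ : ℚ) - 1 := by linarith
  have hqk : (0 : ℚ) < (δ : ℚ) ^ k := pow_pos (by linarith) k
  have hpk0 : (0 : ℚ) ≤ ((δ : ℚ) - 1) ^ k := by positivity
  rcases eq_or_lt_of_le hδ with h | h
  · -- δ = 2
    have hq2 : (δ : ℚ) = 2 := by rw [← h]; norm_num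
    rw [hq2]
    norm_num
    -- goal: 27 * 2^k ≤ 2^k * ((k+1)*4 + (k+1)*2 + 5) + 16  (roughly)
    rcases Nat.lt_or_ge k 3 with h3 | h3
    · interval_cases k
      push_cast
      norm_num
    · have hk3 : (3 : ℚ) ≤ (k : ℚ) := by exact_mod_cast h3
      have h2k : (0 : ℚ) < (2 : ℚ) ^ k := by positivity
      nlinarith [mul_le_mul_of_nonneg_left hk3 (le_of_lt h2k)]
  · -- δ ≥ 3
    have hq3 : (3 : ℚ) ≤ (δ : ℚ) := by exact_mod_cast h
    have hA : ((δ : ℚ) + 1) ^ 2 ≤ 3 * ((δ : ℚ) - 1) ^ 2 * (δ : ℚ) := by nlinarith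
    have hB : ((δ : ℚ) - 1) ^ 2 ≤ ((δ : ℚ) - 1) ^ k := pow_le_pow_right₀ hp1 hk2
    have hk3 : (3 : ℚ) ≤ (k : ℚ) + 1 := by
      have : (2 : ℚ) ≤ (k : ℚ) := by exact_mod_cast hk2
      linarith
    have hC : ((δ : ℚ) + 1) ^ 2 ≤ ((k : ℚ) + 1) * ((δ : ℚ) - 1) ^ k * (δ : ℚ) := by
      have h1 : 3 * ((δ : ℚ) - 1) ^ 2 * (δ : ℚ) ≤ 3 * ((δ : ℚ) - 1) ^ k * (δ : ℚ) := by
        nlinarith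
      have h2' : 3 * ((δ : ℚ) - 1) ^ k * (δ : ℚ) ≤ ((k : ℚ) + 1) * ((δ : ℚ) - 1) ^ k * (δ : ℚ) := by
        nlinarith
      linarith
    have hD := mul_le_mul_of_nonneg_right hC
      (show (0 : ℚ) ≤ ((δ : ℚ) + 1) * (δ : ℚ) ^ k by positivity)
    nlinarith [mul_pos hqk (pow_pos (show (0:ℚ) < (δ:ℚ)-1 by linarith) k),
      mul_nonneg hpk0 (le_of_lt hqk)]

/-- For every positive integer `N`, the sequence `(g_N(δ))_{δ ≥ 2}` is non-increasing. -/
theorem g_antitone (N : ℕ) (hN : 0 < N) :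
    ∀ δ : ℕ, 2 ≤ δ → g N (δ + 1) ≤ g N δ := by
  intro δ hδ
  obtain ⟨k, rfl⟩ : ∃ k, N = k + 1 := ⟨N - 1, (Nat.succ_pred_eq_of_pos hN).symm⟩
  have h2 : (2 : ℚ) ≤ (δ : ℚ) := by exact_mod_cast hδ
  unfold g
  rw [Nat.add_sub_cancel]
  push_cast
  have hb : ((δ : ℚ) + 1 - 1) = (δ : ℚ) := by ring
  rw [hb]
  have hq0 : (0 : ℚ) < (δ : ℚ) := by linarith
  have hp0 : (0 : ℚ) < (δ : ℚ) - 1 := by linarith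
  have hden1 : (0 : ℚ) < (δ : ℚ) ^ 2 * ((δ : ℚ) - 1) ^ k :=
    mul_pos (pow_pos hq0 2) (pow_pos hp0 k)
  have hden2 : (0 : ℚ) < ((δ : ℚ) + 1) ^ 2 * (δ : ℚ) ^ k :=
    mul_pos (pow_pos (by linarith) 2) (pow_pos hq0 k)
  rw [div_le_div_iff₀ hden2 hden1]
  have hple : ((δ : ℚ) - 1) ^ k ≤ (δ : ℚ) ^ k :=
    pow_le_pow_left₀ (by linarith) (by linarith) k
  have hqk : (0 : ℚ) < (δ : ℚ) ^ k := pow_pos hq0 k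
  have hpk0 : (0 : ℚ) ≤ ((δ : ℚ) - 1) ^ k := (pow_pos hp0 k).le
  rcases Nat.even_or_odd k with hk | hk
  · -- k even: (-1)^(k+1) = -1, N odd
    have hε : ((-1 : ℚ)) ^ (k + 1) = -1 := by
      rw [pow_succ, hk.neg_one_pow, one_mul]
    rw [hε]
    have := key_odd k hk δ hδ
    nlinarith [this]
  · -- k odd: (-1)^(k+1) = 1, N even
    have hε : ((-1 : ℚ)) ^ (k + 1) = 1 := (hk.add_one).neg_one_pow
    rw [hε]
    have h1 : ((δ : ℚ) + 2) * (δ : ℚ) ^ 2 ≤ ((δ : ℚ) + 1) ^ 3 := by nlinarith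
    have h2' : ((δ : ℚ) + 2) * (δ : ℚ) ^ 2 * ((δ : ℚ) - 1) ^ k ≤
        ((δ : ℚ) + 1) ^ 3 * (δ : ℚ) ^ k :=
      mul_le_mul h1 hple hpk0 (by positivity)
    nlinarith [h2', mul_nonneg (mul_nonneg hpk0 hqk.le)
      (show (0:ℚ) ≤ ((k : ℚ) + 1) * (δ : ℚ) ^ 2 + ((k : ℚ) + 1) * (δ : ℚ) + 2 * (δ : ℚ) + 1 by positivity)]
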